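/- If a connected simple graph G properly contains a cycle (i.e., G contains a cycle and is not itself a cycle), then ρ(A(G)) > sqrt(2 + sqrt 5). -/

import Mathlib

open Matrix

noncomputable def specRad {m : Type*} [Fintype m] [DecidableEq m]
    (M : Matrix m m ℝ) : ℝ :=
  sSup {r : ℝ | ∃ μ ∈ spectrum ℂ (M.map (Complex.ofReal)), r = ‖μ‖}

lemma rayleigh_lt_specRad {V : Type*} [Fintype V] [DecidableEq V]
    (A : Matrix V V ℝ) (hA : A.IsHermitian) (y : V → ℝ) (c : ℝ)
    (h : c * (∑ v, y v ^ 2) < ∑ v, y v * (A *ᵥ y) v) : c < specRad A := by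
  classical
  -- y ≠ 0
  have hy : y ≠ 0 := by
    rintro rfl
    simp at h
  obtain ⟨v0, hv0⟩ : ∃ v, y v ≠ 0 := by
    by_contra hco; push_neg at hco; exact hy (funext fun v => hco v)
  haveI : Nonempty V := ⟨v0⟩
  haveI : Nontrivial (EuclideanSpace ℝ V) := by
    refine ⟨0, (WithLp.equiv 2 (V → ℝ)).symm y, fun hco => hy ?_⟩
    have := congrArg (WithLp.equiv 2 (V → ℝ)) hco
    simpa using this.symm
  set T : EuclideanSpace ℝ V →ₗ[ℝ] EuclideanSpace ℝ V := Matrix.toEuclideanLin A with hT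
  have hTsymm : T.IsSymmetric := (Matrix.isHermitian_iff_isSymmetric).mp hA
  set lam : ℝ := (⨆ x : { x : EuclideanSpace ℝ V // x ≠ 0 },
      RCLike.re (inner ℝ (T ↑x) ↑x : ℝ) / ‖(x : EuclideanSpace ℝ V)‖ ^ 2) with hlam
  have hEig : Module.End.HasEigenvalue T lam :=
    hTsymm.hasEigenvalue_iSup_of_finiteDimensional
  -- the test vector
  set y' : EuclideanSpace ℝ V := (WithLp.equiv 2 (V → ℝ)).symm y with hy'
  have hy'0 : y' ≠ 0 := by
    intro hco
    apply hy
    have := congrArg (WithLp.equiv 2 (V → ℝ)) hco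
    simpa [hy'] using this
  have hTy' : ∀ w : V, (T y') w = (A *ᵥ y) w := by
    intro w
    rw [hT, Matrix.toEuclideanLin_apply]
    simp [hy']
  have hinner : (inner ℝ (T y') y' : ℝ) = ∑ w, y w * (A *ᵥ y) w := by
    rw [PiLp.inner_apply]
    refine Finset.sum_congr rfl fun w _ => ?_
    rw [hTy' w]
    simp [hy', RCLike.inner_apply, mul_comm]
  have hnorm : ‖y'‖ ^ 2 = ∑ w, y w ^ 2 := by
    rw [← real_inner_self_eq_norm_sq, PiLp.inner_apply]
    refine Finset.sum_congr rfl fun w _ => ?_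
    simp [hy', RCLike.inner_apply, pow_two]
  have hS : (0:ℝ) < ∑ w, y w ^ 2 := by
    have : ∀ w, (0:ℝ) ≤ y w ^ 2 := fun w => sq_nonneg _
    have h1 : (0:ℝ) < y v0 ^ 2 := by positivity
    exact Finset.sum_pos' (fun w _ => this w) ⟨v0, Finset.mem_univ _, h1⟩
  -- Rayleigh quotient of y' is > c
  have hquot : c < RCLike.re (inner ℝ (T y') y' : ℝ) / ‖y'‖ ^ 2 := by
    have : RCLike.re (inner ℝ (T y') y' : ℝ) = ∑ w, y w * (A *ᵥ y) w := by
      simpa using hinner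
    rw [this, hnorm, lt_div_iff₀ hS]
    linarith [h]
  -- bddAbove of the rayleigh quotients
  have hbdd : BddAbove (Set.range fun x : { x : EuclideanSpace ℝ V // x ≠ 0 } =>
      RCLike.re (inner ℝ (T ↑x) ↑x : ℝ) / ‖(x : EuclideanSpace ℝ V)‖ ^ 2) := by
    set T' := LinearMap.toContinuousLinearMap T with hT'
    refine ⟨‖T'‖, ?_⟩
    rintro r ⟨x, rfl⟩
    have hx : (0:ℝ) < ‖(x : EuclideanSpace ℝ V)‖ := norm_pos_iff.mpr x.2
    have h1 : (inner ℝ (T ↑x) ↑x : ℝ) ≤ ‖T (↑x)‖ * ‖(x : EuclideanSpace ℝ V)‖ :=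
      real_inner_le_norm _ _
    have h2 : ‖T (↑x)‖ ≤ ‖T'‖ * ‖(x : EuclideanSpace ℝ V)‖ := by
      have := T'.le_opNorm (↑x)
      simpa [hT'] using this
    have h3 : (inner ℝ (T ↑x) ↑x : ℝ) ≤ ‖T'‖ * ‖(x : EuclideanSpace ℝ V)‖ ^ 2 := by
      nlinarith [norm_nonneg (T (↑x)), hx.le]
    rw [div_le_iff₀ (by positivity)]
    simpa using h3
  have hclam : c < lam := by
    refine lt_of_lt_of_le hquot ?_
    exact le_ciSup hbdd ⟨y', hy'0⟩
  -- eigenvector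
  obtain ⟨w, hw⟩ := hEig.exists_hasEigenvector
  have hw0 : w ≠ 0 := hw.right
  have hwApp : T w = lam • w := hw.apply_eq_smul
  set wf : V → ℝ := (WithLp.equiv 2 (V → ℝ)) w with hwf
  have hwf0 : wf ≠ 0 := by
    intro hco
    apply hw0
    have := congrArg (WithLp.equiv 2 (V → ℝ)).symm hco
    simpa [hwf] using this
  have hmv : A *ᵥ wf = lam • wf := by
    have := congrArg (WithLp.equiv 2 (V → ℝ)) hwApp
    rw [hT, Matrix.toEuclideanLin_apply] at this
    simpa [hwf] using this
  -- determinant vanishes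
  have hdet : (lam • (1 : Matrix V V ℝ) - A).det = 0 := by
    rw [← Matrix.exists_mulVec_eq_zero_iff]
    refine ⟨wf, hwf0, ?_⟩
    rw [Matrix.sub_mulVec, Matrix.smul_mulVec, Matrix.one_mulVec, hmv, sub_self]
  -- complex spectrum
  have hdetC : ((lam : ℂ) • (1 : Matrix V V ℂ) - A.map Complex.ofReal).det = 0 := by
    have hmap : ((lam • (1 : Matrix V V ℝ) - A).map (Complex.ofReal)) =
        (lam : ℂ) • (1 : Matrix V V ℂ) - A.map Complex.ofReal := by
      ext i j
      by_cases hij : i = j <;> simp [Matrix.map_apply, Matrix.one_apply, hij]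
    have := (Complex.ofRealHom).map_det (lam • (1 : Matrix V V ℝ) - A)
    rw [hdet] at this
    simp only [map_zero] at this
    rw [← hmap]
    rw [RingHom.mapMatrix_apply] at this
    have : ((lam • (1 : Matrix V V ℝ) - A).map (Complex.ofRealHom)).det = 0 := this.symm
    exact this
  have hspec : (lam : ℂ) ∈ spectrum ℂ (A.map Complex.ofReal) := by
    rw [spectrum.mem_iff]
    intro hunit
    rw [Algebra.algebraMap_eq_smul_one] at hunit
    rw [Matrix.isUnit_iff_isUnit_det] at hunit
    rw [hdetC] at hunit
    simp at hunit
  -- conclude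
  have hmem : |lam| ∈ {r : ℝ | ∃ μ ∈ spectrum ℂ (A.map (Complex.ofReal)), r = ‖μ‖} :=
    ⟨(lam : ℂ), hspec, (by simp)⟩
  have hbdd2 : BddAbove {r : ℝ | ∃ μ ∈ spectrum ℂ (A.map (Complex.ofReal)), r = ‖μ‖} := by
    have : {r : ℝ | ∃ μ ∈ spectrum ℂ (A.map (Complex.ofReal)), r = ‖μ‖} =
        (fun μ : ℂ => ‖μ‖) '' (spectrum ℂ (A.map Complex.ofReal)) := by
      ext r
      constructor
      · rintro ⟨μ, hμ, rfl⟩; exact ⟨μ, hμ, rfl⟩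
      · rintro ⟨μ, hμ, rfl⟩; exact ⟨μ, hμ, rfl⟩
    rw [this]
    exact ((Matrix.finite_spectrum _).image _).bddAbove
  calc c < lam := hclam
    _ ≤ |lam| := le_abs_self lam
    _ ≤ specRad A := le_csSup hbdd2 hmem




lemma magic_t : ∃ t : ℝ, 0 < t ∧ t < 1 ∧
    1 + t^2 = Real.sqrt (2 + Real.sqrt 5) * t ∧
    1 - t^4 = Real.sqrt (2 + Real.sqrt 5) * (t - t^3) ∧
    2*t*(1 - t^4) + (t - t^3) = Real.sqrt (2 + Real.sqrt 5) * (1 - t^4) := by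
  have h5 : Real.sqrt 5 ^ 2 = 5 := Real.sq_sqrt (by norm_num)
  have h5nn : 0 ≤ Real.sqrt 5 := Real.sqrt_nonneg 5
  have h52 : 2 ≤ Real.sqrt 5 := by nlinarith
  set q : ℝ := Real.sqrt 5 with hq
  set φ : ℝ := (1 + q)/2 with hφ
  have hφ1 : 1 < φ := by rw [hφ]; linarith
  have hφ0 : 0 < φ := by linarith
  have hφ2 : φ^2 = φ + 1 := by rw [hφ]; linear_combination h5/4
  set s : ℝ := Real.sqrt φ with hs
  have hs2 : s^2 = φ := Real.sq_sqrt hφ0.le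
  have hs0 : 0 ≤ s := Real.sqrt_nonneg _
  have hs1 : 1 < s := by nlinarith
  have hsne : s ≠ 0 := by positivity
  set c : ℝ := Real.sqrt (2 + q) with hcdef
  have hc : c = φ * s := by
    have h1 : 2 + q = (φ * s)^2 := by
      have h2 : (φ*s)^2 = φ^2 * s^2 := by ring
      rw [h2, hs2, hφ2]; rw [hφ]; linear_combination -h5/4
    rw [hcdef, h1, Real.sqrt_sq (by positivity)]
  have hc2 : c^2 = 2 + q := Real.sq_sqrt (by positivity)
  set t : ℝ := 1/s with ht
  have ht0 : 0 < t := by positivity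
  have ht1 : t < 1 := by rw [ht, div_lt_one (by linarith)]; exact hs1
  have hct : c * t = φ := by rw [hc, ht]; field_simp
  have ht2 : t^2 = 1/φ := by rw [ht, ← hs2]; field_simp
  have hI1 : 1 + t^2 = c * t := by
    rw [ht2, hct]
    field_simp
    linear_combination hφ2 - h5/2
  have hI2 : 1 - t^4 = c * (t - t^3) := by
    have e1 : c * (t - t^3) = (c*t) * (1 - t^2) := by ring
    have e2 : t^4 = (t^2)^2 := by ring
    rw [e1, hct, e2, ht2]
    field_simp
    linear_combination (φ + 1) * hφ2 - (1+q)/4 * h5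
  have hI3 : 2*t*(1 - t^4) + (t - t^3) = c * (1 - t^4) := by
    linear_combination (2*t - c) * hI2 + 2*(t - t^3)*hct - (t - t^3)*hc2
  exact ⟨t, ht0, ht1, hI1, hI2, hI3⟩


lemma key_lollipop {V : Type*} [Fintype V] [DecidableEq V] (G : SimpleGraph V) [DecidableRel G.Adj]
    (g : ℕ) (hg : 3 ≤ g) (f : ℕ → V) (u : V)
    (hinj : ∀ i < g, ∀ j < g, f i = f j → i = j)
    (hadj : ∀ i < g, G.Adj (f i) (f ((i+1) % g)))
    (hu : ∀ i < g, u ≠ f i)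
    (huadj : G.Adj u (f 0)) :
    Real.sqrt (2 + Real.sqrt 5) < specRad (G.adjMatrix ℝ) := by
  classical
  obtain ⟨t, ht0, ht1, hI1, hI2, hI3⟩ := magic_t
  set c : ℝ := Real.sqrt (2 + Real.sqrt 5) with hc
  have hc0 : 0 < c := by nlinarith [hI1]
  set y0 : ℝ := 1 - t^4 with hy0
  set y1 : ℝ := t - t^3 with hy1
  have hy0pos : 0 < y0 := by rw [hy0]; nlinarith
  have hy1pos : 0 < y1 := by rw [hy1]; nlinarith
  set d : ℕ → ℕ := fun i => min i (g - i) with hd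
  set y : V → ℝ := fun v =>
    (if v = u then y1 else 0) +
      ∑ i ∈ Finset.range g, (if v = f i then y0 * t ^ (d i) else 0) with hy
  have hyu : y u = y1 := by
    rw [hy]; simp only
    rw [if_true, Finset.sum_eq_zero, add_zero]
    intro i hi
    rw [if_neg (hu i (Finset.mem_range.mp hi))]
  have hyf : ∀ j, j < g → y (f j) = y0 * t ^ (d j) := by
    intro j hj
    rw [hy]; simp only
    rw [if_neg (Ne.symm (hu j hj))]
    rw [Finset.sum_eq_single j]
    · rw [if_pos rfl, zero_add]
    · intro i hi hij
      rw [if_neg]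
      intro hfe
      exact hij (hinj i (Finset.mem_range.mp hi) j hj hfe.symm)
    · intro hj'; exact absurd (Finset.mem_range.mpr hj) hj'
  have hynn : ∀ v, 0 ≤ y v := by
    intro v; rw [hy]; simp only
    apply add_nonneg
    · split_ifs
      · exact hy1pos.le
      · exact le_refl 0
    · apply Finset.sum_nonneg
      intro i _
      split_ifs
      · positivity
      · exact le_refl 0
  have hsub : ∀ (v : V) (S : Finset V), S ⊆ G.neighborFinset v →
      ∑ w ∈ S, y w ≤ (G.adjMatrix ℝ *ᵥ y) v := by
    intro v S hS
    rw [SimpleGraph.adjMatrix_mulVec_apply]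
    exact Finset.sum_le_sum_of_subset_of_nonneg hS (fun w _ _ => hynn w)
  have hpow : ∀ m n : ℕ, m ≤ n → t^n ≤ t^m :=
    fun m n h => pow_le_pow_of_le_one ht0.le ht1.le h
  have hbase : ∀ a : ℕ, 1 ≤ a → t^(a-1) + t^(a+1) = c * t^a := by
    intro a ha
    have e1 : t^(a+1) = t^(a-1) * t^2 := by
      rw [← pow_add]; congr 1; omega
    have e2 : t^a = t^(a-1) * t := by
      rw [← pow_succ]; congr 1; omega
    rw [e1, e2]
    calc t^(a-1) + t^(a-1)*t^2 = t^(a-1) * (1 + t^2) := by ring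
      _ = t^(a-1) * (c * t) := by rw [hI1]
      _ = c * (t^(a-1) * t) := by ring
  -- the interior estimate facts
  have hgpos : 0 < g := by omega
  -- main pointwise bound
  have hmain : ∀ v, c * y v ≤ (G.adjMatrix ℝ *ᵥ y) v := by
    intro v
    by_cases hvu : v = u
    · subst hvu
      have hsum : ∑ w ∈ ({f 0} : Finset V), y w ≤ (G.adjMatrix ℝ *ᵥ y) v := by
        apply hsub
        intro w hw
        rw [Finset.mem_singleton] at hw
        subst hw
        rw [SimpleGraph.mem_neighborFinset]
        exact huadj
      rw [Finset.sum_singleton, hyf 0 hgpos] at hsum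
      have hd0 : d 0 = 0 := by simp [hd]
      rw [hyu]
      rw [hd0, pow_zero, mul_one] at hsum
      have : c * y1 = y0 := hI2.symm
      linarith
    · by_cases hvf : ∃ j, j < g ∧ f j = v
      · obtain ⟨j, hj, hfj⟩ := hvf
        subst hfj
        by_cases hj0 : j = 0
        · subst hj0
          have h1g : 1 < g := by omega
          have hg1 : g - 1 < g := by omega
          have hne1 : f 1 ≠ f (g-1) := by
            intro hco
            have := hinj 1 h1g (g-1) hg1 hco
            omega
          have hnu : u ∉ ({f 1, f (g-1)} : Finset V) := by
            intro hco
            rcases Finset.mem_insert.mp hco with h | h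
            · exact hu 1 h1g h
            · exact hu (g-1) hg1 (Finset.mem_singleton.mp h)
          have hsum : ∑ w ∈ insert u ({f 1, f (g-1)} : Finset V), y w
              ≤ (G.adjMatrix ℝ *ᵥ y) (f 0) := by
            apply hsub
            intro w hw
            rw [SimpleGraph.mem_neighborFinset]
            rcases Finset.mem_insert.mp hw with h | h
            · subst h; exact huadj.symm
            · rcases Finset.mem_insert.mp h with h' | h'
              · subst h'
                have := hadj 0 hgpos
                rwa [Nat.mod_eq_of_lt h1g] at this
              · rw [Finset.mem_singleton] at h'
                subst h'
                have := hadj (g-1) hg1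
                have e : (g - 1 + 1) % g = 0 := by
                  have : g - 1 + 1 = g := by omega
                  rw [this, Nat.mod_self]
                rw [e] at this
                exact this.symm
          rw [Finset.sum_insert hnu, Finset.sum_pair hne1, hyu,
            hyf 1 h1g, hyf (g-1) hg1] at hsum
          have hd1 : d 1 = 1 := by simp only [hd]; omega
          have hdg1 : d (g-1) = 1 := by simp only [hd]; omega
          rw [hd1, hdg1, pow_one] at hsum
          rw [hyf 0 hgpos]
          have hd0 : d 0 = 0 := by simp [hd]
          rw [hd0, pow_zero, mul_one]
          nlinarith [hI3]
        · -- interior vertex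
          have hj1 : 1 ≤ j := by omega
          set k2i : ℕ := (j+1) % g with hk2i
          have hcase : (k2i = j + 1 ∧ j + 1 < g) ∨ (j = g - 1 ∧ k2i = 0) := by
            by_cases hjg : j + 1 < g
            · left; exact ⟨by rw [hk2i]; exact Nat.mod_eq_of_lt hjg, hjg⟩
            · right
              constructor
              · omega
              · rw [hk2i]
                have : j + 1 = g := by omega
                rw [this, Nat.mod_self]
          have hj1g : j - 1 < g := by omega
          have hk2g : k2i < g := by rw [hk2i]; exact Nat.mod_lt _ hgpos
          have hneq : f (j-1) ≠ f k2i := by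
            intro hco
            have := hinj (j-1) hj1g k2i hk2g hco
            rcases hcase with ⟨h1, h2⟩ | ⟨h1, h2⟩ <;> omega
          have hsum : ∑ w ∈ ({f (j-1), f k2i} : Finset V), y w
              ≤ (G.adjMatrix ℝ *ᵥ y) (f j) := by
            apply hsub
            intro w hw
            rw [SimpleGraph.mem_neighborFinset]
            rcases Finset.mem_insert.mp hw with h | h
            · subst h
              have := hadj (j-1) hj1g
              have e : (j - 1 + 1) % g = j := by
                have e2 : j - 1 + 1 = j := by omega
                rw [e2, Nat.mod_eq_of_lt hj]
              rw [e] at this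
              exact this.symm
            · rw [Finset.mem_singleton] at h
              subst h
              exact hadj j hj
          rw [Finset.sum_pair hneq, hyf (j-1) hj1g, hyf k2i hk2g] at hsum
          rw [hyf j hj]
          -- nat facts
          have ha1 : 1 ≤ d j := by simp only [hd]; omega
          have hdisj : (d (j-1) ≤ d j - 1 ∧ d k2i ≤ d j + 1) ∨
              (d k2i ≤ d j - 1 ∧ d (j-1) ≤ d j + 1) := by
            simp only [hd]
            rcases hcase with ⟨h1, h2⟩ | ⟨h1, h2⟩ <;> rw [h1] <;> omega
          have hb := hbase (d j) ha1
          rcases hdisj with ⟨hA1, hA2⟩ | ⟨hA1, hA2⟩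
          · have p1 := hpow _ _ hA1
            have p2 := hpow _ _ hA2
            nlinarith [hsum, hy0pos, p1, p2]
          · have p1 := hpow _ _ hA1
            have p2 := hpow _ _ hA2
            nlinarith [hsum, hy0pos, p1, p2]
      · -- y v = 0
        have hyv : y v = 0 := by
          rw [hy]; simp only
          rw [if_neg hvu, Finset.sum_eq_zero, add_zero]
          intro i hi
          rw [if_neg]
          intro hco
          exact hvf ⟨i, Finset.mem_range.mp hi, hco.symm⟩
        rw [hyv, mul_zero, SimpleGraph.adjMatrix_mulVec_apply]
        exact Finset.sum_nonneg (fun w _ => hynn w)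
  -- strict bound at the far vertex
  set i0 : ℕ := g / 2 with hi0
  have hi0pos : 0 < i0 := by omega
  have hi0g : i0 < g := by omega
  have hi01g : i0 + 1 < g := by omega
  have hstrict : c * y (f i0) < (G.adjMatrix ℝ *ᵥ y) (f i0) := by
    have hi1g : i0 - 1 < g := by omega
    have hneq : f (i0-1) ≠ f (i0+1) := by
      intro hco
      have := hinj (i0-1) hi1g (i0+1) hi01g hco
      omega
    have hsum : ∑ w ∈ ({f (i0-1), f (i0+1)} : Finset V), y w
        ≤ (G.adjMatrix ℝ *ᵥ y) (f i0) := by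
      apply hsub
      intro w hw
      rw [SimpleGraph.mem_neighborFinset]
      rcases Finset.mem_insert.mp hw with h | h
      · subst h
        have := hadj (i0-1) hi1g
        have e : (i0 - 1 + 1) % g = i0 := by
          have e2 : i0 - 1 + 1 = i0 := by omega
          rw [e2, Nat.mod_eq_of_lt hi0g]
        rw [e] at this
        exact this.symm
      · rw [Finset.mem_singleton] at h
        subst h
        have := hadj i0 hi0g
        rwa [Nat.mod_eq_of_lt hi01g] at this
    rw [Finset.sum_pair hneq, hyf (i0-1) hi1g, hyf (i0+1) hi01g] at hsum
    rw [hyf i0 hi0g]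
    have hdA : d i0 = i0 := by simp only [hd]; omega
    have hdB : d (i0-1) = i0 - 1 := by simp only [hd]; omega
    have hdC : d (i0+1) ≤ i0 := by simp only [hd]; omega
    have hb := hbase i0 (by omega)
    have p2 : t^(i0+1) < t^(d (i0+1)) := by
      calc t^(i0+1) < t^i0 := by
            apply pow_lt_pow_right_of_lt_one₀ ht0 ht1
            omega
        _ ≤ t^(d (i0+1)) := hpow _ _ hdC
    have p1 : t^(i0-1) ≤ t^(d (i0-1)) := by rw [hdB]
    rw [hdA]
    nlinarith [hsum, hy0pos]
  -- conclude via Rayleigh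
  have hH : (G.adjMatrix ℝ).IsHermitian := by
    show (G.adjMatrix ℝ)ᴴ = G.adjMatrix ℝ
    ext i j
    simp [Matrix.conjTranspose_apply, SimpleGraph.adjMatrix_apply, SimpleGraph.adj_comm]
  apply rayleigh_lt_specRad _ hH y
  have hterm : ∀ v, c * y v ^ 2 ≤ y v * (G.adjMatrix ℝ *ᵥ y) v := by
    intro v
    have h1 := mul_le_mul_of_nonneg_left (hmain v) (hynn v)
    calc c * y v ^ 2 = y v * (c * y v) := by ring
      _ ≤ y v * (G.adjMatrix ℝ *ᵥ y) v := h1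
  have hvpos : 0 < y (f i0) := by
    rw [hyf i0 hi0g]; positivity
  have htermS : c * y (f i0) ^ 2 < y (f i0) * (G.adjMatrix ℝ *ᵥ y) (f i0) := by
    have h1 := mul_lt_mul_of_pos_left hstrict hvpos
    calc c * y (f i0) ^ 2 = y (f i0) * (c * y (f i0)) := by ring
      _ < _ := h1
  calc c * ∑ v, y v ^ 2 = ∑ v, c * y v ^ 2 := by rw [Finset.mul_sum]
    _ < ∑ v, y v * (G.adjMatrix ℝ *ᵥ y) v :=
        Finset.sum_lt_sum (fun v _ => hterm v) ⟨f i0, Finset.mem_univ _, htermS⟩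




section Extract
variable {V : Type*} [Fintype V] [DecidableEq V] (G : SimpleGraph V) [DecidableRel G.Adj]

lemma walk_support_eq {a b : V} (p : G.Walk a b) :
    p.support = (List.range (p.length + 1)).map p.getVert := by
  induction p with
  | nil => simp [SimpleGraph.Walk.getVert]
  | cons h q ih =>
    rw [SimpleGraph.Walk.support_cons, ih]
    conv_rhs => rw [SimpleGraph.Walk.length_cons, List.range_succ_eq_map]
    rw [List.map_cons, List.map_map, SimpleGraph.Walk.getVert_zero]
    congr 1

/-- rotation of cycle data -/
lemma rotate_data (g : ℕ) (hg : 3 ≤ g) (f : ℕ → V)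
    (hinj : ∀ i < g, ∀ j < g, f i = f j → i = j)
    (hadj : ∀ i < g, G.Adj (f i) (f ((i+1) % g))) (k : ℕ) (hk : k < g) :
    (∀ i < g, ∀ j < g, (fun i => f ((i + k) % g)) i = (fun i => f ((i + k) % g)) j → i = j) ∧
    (∀ i < g, G.Adj ((fun i => f ((i + k) % g)) i) ((fun i => f ((i + k) % g)) ((i+1) % g))) ∧
    ((fun i => f ((i + k) % g)) 0 = f k) ∧
    (∀ w : V, (∃ i < g, f i = w) → (∃ i < g, (fun i => f ((i + k) % g)) i = w)) := by
  have hgpos : 0 < g := by omega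
  refine ⟨?_, ?_, ?_, ?_⟩
  · intro i hi j hj hco
    simp only at hco
    have h1 := hinj _ (Nat.mod_lt _ hgpos) _ (Nat.mod_lt _ hgpos) hco
    have h3 : i % g = j % g :=
      Nat.ModEq.add_right_cancel' k (h1 : (i + k) ≡ (j + k) [MOD g])
    rwa [Nat.mod_eq_of_lt hi, Nat.mod_eq_of_lt hj] at h3
  · intro i hi
    simp only
    have e1 : ((i+1) % g + k) % g = ((i + k) % g + 1) % g := by
      rw [Nat.mod_add_mod, Nat.mod_add_mod]
      congr 1
      omega
    rw [e1]
    exact hadj _ (Nat.mod_lt _ hgpos)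
  · simp only [Nat.zero_add, Nat.mod_eq_of_lt hk]
  · intro w ⟨j, hj, hfj⟩
    refine ⟨(j + g - k) % g, Nat.mod_lt _ hgpos, ?_⟩
    simp only
    rw [Nat.mod_add_mod]
    have e : j + g - k + k = j + g := by omega
    rw [e]
    rw [Nat.add_mod_right, Nat.mod_eq_of_lt hj]
    exact hfj

lemma exists_data (hconn : G.Connected) (hcyc : ¬ G.IsAcyclic)
    (hnotcycle : ¬ ∀ v : V, G.degree v = 2) :
    ∃ (g : ℕ) (f : ℕ → V) (u : V), 3 ≤ g ∧
      (∀ i < g, ∀ j < g, f i = f j → i = j) ∧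
      (∀ i < g, G.Adj (f i) (f ((i+1) % g))) ∧
      (∀ i < g, u ≠ f i) ∧ G.Adj u (f 0) := by
  classical
  simp only [SimpleGraph.IsAcyclic, not_forall, not_not] at hcyc
  obtain ⟨v, p, hp⟩ := hcyc
  set g : ℕ := p.length with hgdef
  have hg : 3 ≤ g := hp.three_le_length
  have hgpos : 0 < g := by omega
  set f : ℕ → V := fun i => p.getVert (i + 1) with hf
  -- injectivity
  have htail : p.support.tail = (List.range g).map f := by
    rw [walk_support_eq, List.range_succ_eq_map, List.map_cons, List.tail_cons, List.map_map]
    exact List.map_congr_left fun n _ => rfl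
  have hinj : ∀ i < g, ∀ j < g, f i = f j → i = j := by
    intro i hi j hj hco
    have hnd : ((List.range g).map f).Nodup := by rw [← htail]; exact hp.support_nodup
    exact List.inj_on_of_nodup_map hnd (List.mem_range.mpr hi) (List.mem_range.mpr hj) hco
  -- adjacency
  have hadj : ∀ i < g, G.Adj (f i) (f ((i+1) % g)) := by
    intro i hi
    by_cases hig : i + 1 < g
    · rw [hf]
      simp only
      rw [Nat.mod_eq_of_lt hig]
      exact p.adj_getVert_succ (by omega)
    · have hieq : i = g - 1 := by omega
      have e0 : (i + 1) % g = 0 := by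
        have : i + 1 = g := by omega
        rw [this, Nat.mod_self]
      rw [e0, hf]
      simp only
      have e1 : i + 1 = g := by omega
      rw [e1]
      have e2 : p.getVert g = v := by
        rw [hgdef]; exact p.getVert_length
      rw [e2]
      have := p.adj_getVert_succ (show 0 < p.length by omega)
      rwa [p.getVert_zero, zero_add] at this
  -- support characterization
  have hmem : ∀ w : V, w ∈ p.support ↔ ∃ i < g, f i = w := by
    intro w
    rw [SimpleGraph.Walk.mem_support_iff_exists_getVert]
    constructor
    · rintro ⟨n, hn, hng⟩
      by_cases hn0 : n = 0
      · refine ⟨g - 1, by omega, ?_⟩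
        rw [hf]; simp only
        have e : g - 1 + 1 = g := by omega
        rw [e]
        have e2 : p.getVert g = v := by rw [hgdef]; exact p.getVert_length
        rw [e2, ← hn, hn0, p.getVert_zero]
      · refine ⟨n - 1, by omega, ?_⟩
        rw [hf]; simp only
        have e : n - 1 + 1 = n := by omega
        rw [e]; exact hn
    · rintro ⟨i, hi, hfi⟩
      exact ⟨i + 1, hfi, by omega⟩
  by_cases hall : ∀ w : V, ∃ i < g, f i = w
  · -- spanning: find a chord
    obtain ⟨w0, hw0⟩ : ∃ w0 : V, G.degree w0 ≠ 2 := by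
      by_contra hco; push_neg at hco; exact hnotcycle hco
    obtain ⟨k, hk, hfk⟩ := hall w0
    -- rotate so that f' 0 = w0
    obtain ⟨hinj', hadj', hzero, himg⟩ := rotate_data G g hg f hinj hadj k hk
    set f' : ℕ → V := fun i => f ((i + k) % g) with hf'
    have hall' : ∀ w : V, ∃ i < g, f' i = w := fun w => himg w (hall w)
    have hzero' : f' 0 = w0 := by rw [hzero, hfk]
    -- two known neighbours of w0
    have h1g : 1 < g := by omega
    have hg1 : g - 1 < g := by omega
    have hadj01 : G.Adj (f' 0) (f' 1) := by
      have := hadj' 0 hgpos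
      rwa [Nat.mod_eq_of_lt h1g] at this
    have hadjlast : G.Adj (f' (g-1)) (f' 0) := by
      have := hadj' (g-1) hg1
      have e : (g - 1 + 1) % g = 0 := by
        have : g - 1 + 1 = g := by omega
        rw [this, Nat.mod_self]
      rwa [e] at this
    have hne : f' 1 ≠ f' (g-1) := by
      intro hco
      have := hinj' 1 h1g (g-1) hg1 hco
      omega
    have hsubN : ({f' 1, f' (g-1)} : Finset V) ⊆ G.neighborFinset (f' 0) := by
      intro x hx
      rw [SimpleGraph.mem_neighborFinset]
      rcases Finset.mem_insert.mp hx with h | h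
      · subst h; exact hadj01
      · rw [Finset.mem_singleton] at h; subst h; exact hadjlast.symm
    have hcard2 : ({f' 1, f' (g-1)} : Finset V).card = 2 := by
      rw [Finset.card_insert_of_notMem (by simpa using hne), Finset.card_singleton]
    have hdeg : 2 < (G.neighborFinset (f' 0)).card := by
      have hle : 2 ≤ (G.neighborFinset (f' 0)).card := by
        rw [← hcard2]; exact Finset.card_le_card hsubN
      have : (G.neighborFinset (f' 0)).card ≠ 2 := by
        rw [hzero'] at *
        exact hw0
      omega
    obtain ⟨z, hzmem, hznot⟩ : ∃ z ∈ G.neighborFinset (f' 0), z ∉ ({f' 1, f' (g-1)} : Finset V) := by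
      by_contra hco
      push_neg at hco
      have : G.neighborFinset (f' 0) ⊆ ({f' 1, f' (g-1)} : Finset V) := hco
      have := Finset.card_le_card this
      omega
    have hzadj : G.Adj (f' 0) z := (SimpleGraph.mem_neighborFinset _ _ _).mp hzmem
    obtain ⟨b, hb, hfb⟩ := hall' z
    have hb0 : b ≠ 0 := by
      intro hco; subst hco
      rw [hfb] at hzadj
      exact G.loopless.irrefl _ hzadj
    have hb1 : b ≠ 1 := by
      intro hco; subst hco
      apply hznot
      rw [← hfb]
      exact Finset.mem_insert_self _ _
    have hbg1 : b ≠ g - 1 := by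
      intro hco; subst hco
      apply hznot
      rw [← hfb]
      exact Finset.mem_insert_of_mem (Finset.mem_singleton_self _)
    have hb2 : 2 ≤ b := by omega
    have hbg2 : b ≤ g - 2 := by omega
    -- new cycle of length b+1 plus pendant vertex f' (b+1)
    refine ⟨b + 1, fun i => f' (b - i), f' (b+1), by omega, ?_, ?_, ?_, ?_⟩
    · intro i hi j hj hco
      simp only at hco
      have := hinj' (b - i) (by omega) (b - j) (by omega) hco
      omega
    · intro i hi
      simp only
      by_cases hib : i < b
      · have e : (i + 1) % (b + 1) = i + 1 := Nat.mod_eq_of_lt (by omega)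
        rw [e]
        have := hadj' (b - i - 1) (by omega)
        have e2 : (b - i - 1 + 1) % g = b - i := by
          rw [Nat.mod_eq_of_lt (by omega)]
          omega
        rw [e2] at this
        have e3 : b - (i + 1) = b - i - 1 := by omega
        rw [e3]
        exact this.symm
      · have hieq : i = b := by omega
        rw [hieq, Nat.mod_self]
        simp only [Nat.sub_self, Nat.sub_zero]
        rw [hfb]
        exact hzadj
    · intro i hi
      simp only
      intro hco
      have := hinj' (b+1) (by omega) (b - i) (by omega) hco
      omega
    · simp only [Nat.sub_zero]
      have := hadj' b hb
      have e : (b + 1) % g = b + 1 := Nat.mod_eq_of_lt (by omega)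
      rw [e] at this
      exact this.symm
  · -- not spanning: boundary dart
    push_neg at hall
    obtain ⟨w, hw⟩ := hall
    obtain ⟨q⟩ := hconn.preconnected (f 0) w
    have hf0S : f 0 ∈ {x : V | ∃ i < g, f i = x} := ⟨0, hgpos, rfl⟩
    have hwS : w ∉ {x : V | ∃ i < g, f i = x} := by
      intro ⟨i, hi, hfi⟩
      exact hw i hi hfi
    obtain ⟨dart, hdmem, hd1, hd2⟩ := q.exists_boundary_dart _ hf0S hwS
    obtain ⟨j, hj, hfj⟩ := hd1
    obtain ⟨hinj', hadj', hzero, himg⟩ := rotate_data G g hg f hinj hadj j hj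
    refine ⟨g, fun i => f ((i + j) % g), dart.toProd.2, hg, hinj', hadj', ?_, ?_⟩
    · intro i hi hco
      apply hd2
      exact ⟨(i + j) % g, Nat.mod_lt _ hgpos, hco.symm⟩
    · rw [hzero, hfj]
      exact dart.adj.symm
end Extract


/-- If a connected graph `G` properly contains a cycle (it has a cycle but is not itself
a cycle, i.e. not all degrees equal `2`), then `ρ(A(G)) > √(2 + √5)`. -/
theorem stmt_13 {V : Type*} [Fintype V] [DecidableEq V] (G : SimpleGraph V)
    [DecidableRel G.Adj] (hconn : G.Connected) (hcyc : ¬ G.IsAcyclic)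
    (hnotcycle : ¬ ∀ v : V, G.degree v = 2) :
    Real.sqrt (2 + Real.sqrt 5) < specRad (G.adjMatrix ℝ) := by
  obtain ⟨g, f, u, hg, hinj, hadj, hu, huadj⟩ := exists_data G hconn hcyc hnotcycle
  exact key_lollipop G g hg f u hinj hadj hu huadj
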